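/- Let W be an additive abelian group and A a commutative ring with a W-grading A = ⊕_{w∈W} A_w. Let w ∈ W and let s ∈ A be a unit such that s ∈ A_w and s⁻¹ ∈ A_{−w}. Then for every integer n, the component A_{n•w} equals {s^n · a : a ∈ A_0}, where s^n is the n-th power of s as a unit of A (allowing negative n). -/

import Mathlib

/-- If `s` is a unit of a `W`-graded commutative ring with `s ∈ A_w` and `s⁻¹ ∈ A_{-w}`,
then for every integer `n` the component `A_{n•w}` is `s^n · A_0`. -/
theorem graded_component_of_homogeneous_unit {W A : Type*} [AddCommGroup W] [DecidableEq W]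
    [CommRing A] (𝒜 : W → AddSubgroup A) [GradedRing 𝒜] (w : W) (s : Aˣ)
    (hs : (s : A) ∈ 𝒜 w) (hs' : ((s⁻¹ : Aˣ) : A) ∈ 𝒜 (-w)) :
    ∀ n : ℤ, (𝒜 (n • w) : Set A) = {x : A | ∃ a ∈ 𝒜 0, x = ((s ^ n : Aˣ) : A) * a} := by
  have key : ∀ n : ℤ, ((s ^ n : Aˣ) : A) ∈ 𝒜 (n • w) := by
    intro n
    induction n using Int.induction_on with
    | zero => simpa using SetLike.one_mem_graded 𝒜
    | succ k ih =>
      have : ((s ^ ((k : ℤ) + 1) : Aˣ) : A) = ((s ^ (k : ℤ) : Aˣ) : A) * s := by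
        rw [zpow_add_one]; rfl
      rw [this, add_smul, one_smul]
      exact SetLike.mul_mem_graded ih hs
    | pred k ih =>
      have : ((s ^ (-(k : ℤ) - 1) : Aˣ) : A) = ((s ^ (-(k : ℤ)) : Aˣ) : A) * (s⁻¹ : Aˣ) := by
        rw [zpow_sub_one]; rfl
      rw [this, sub_smul, one_smul, sub_eq_add_neg]
      exact SetLike.mul_mem_graded ih hs'
  intro n
  ext x
  constructor
  · intro hx
    refine ⟨((s ^ n)⁻¹ : Aˣ) * x, ?_, ?_⟩
    · have h1 : (((s ^ n)⁻¹ : Aˣ) : A) ∈ 𝒜 ((-n) • w) := by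
        rw [← zpow_neg]; exact key (-n)
      have := SetLike.mul_mem_graded h1 hx
      simpa [neg_smul] using this
    · rw [← mul_assoc]
      simp
  · rintro ⟨a, ha, rfl⟩
    have := SetLike.mul_mem_graded (key n) ha
    simpa using this
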